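/- For every a > 0 there exists a constant C > 0, depending only on a, with the following property: for every R > 0 and every continuous nonnegative function L : [0,R) → ℝ with L(0) = 0 satisfying hypothesis (★′_a) on [0,R), one has ∫₀^t L(r) dr ≤ C·e^{2at} for all t ∈ (0,R). -/

import Mathlib

open Real MeasureTheory intervalIntegral Set

/-- Hypothesis (★′_a): for all `η, t` with `0 < η ≤ t < R`,
`(1/η²)·∫_{t−η}^{t} e^{−2ar}·L(r) dr + (6a/η²)·∫_{t−η}^{t} (t−r)·e^{−2ar}·L(r) dr
  ≤ 2π + (2/η)·e^{−2a(t−η)}·L(t−η)`. -/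
def StarHyp' (a R : ℝ) (L : ℝ → ℝ) : Prop :=
  ∀ η t : ℝ, 0 < η → η ≤ t → t < R →
    (1 / η ^ 2) * (∫ r in (t - η)..t, Real.exp (-2 * a * r) * L r)
      + (6 * a / η ^ 2) * (∫ r in (t - η)..t, (t - r) * Real.exp (-2 * a * r) * L r)
    ≤ 2 * Real.pi + (2 / η) * Real.exp (-2 * a * (t - η)) * L (t - η)

namespace Stmt9Aux

noncomputable def G (a : ℝ) (L : ℝ → ℝ) (r : ℝ) : ℝ := Real.exp (-2 * a * r) * L r

noncomputable def F (a : ℝ) (L : ℝ → ℝ) (x : ℝ) : ℝ := ∫ r in (0:ℝ)..x, G a L r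

variable {a R : ℝ} {L : ℝ → ℝ}

lemma Gcont (hLc : ContinuousOn L (Ico 0 R)) : ContinuousOn (G a L) (Ico 0 R) := by
  apply ContinuousOn.mul _ hLc
  exact (Real.continuous_exp.comp (by continuity)).continuousOn

lemma Gnn (hLnn : ∀ r ∈ Ico (0:ℝ) R, 0 ≤ L r) : ∀ r ∈ Ico (0:ℝ) R, 0 ≤ G a L r :=
  fun r hr => mul_nonneg (Real.exp_nonneg _) (hLnn r hr)

lemma Gint (hLc : ContinuousOn L (Ico 0 R)) {u v : ℝ} (hu : 0 ≤ u) (huv : u ≤ v)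
    (hv : v < R) : IntervalIntegrable (G a L) volume u v := by
  apply ContinuousOn.intervalIntegrable
  apply (Gcont hLc).mono
  rw [uIcc_of_le huv]
  exact fun x hx => ⟨le_trans hu hx.1, lt_of_le_of_lt hx.2 hv⟩

lemma Fdiff (hLc : ContinuousOn L (Ico 0 R)) {u v : ℝ} (hu : 0 ≤ u) (huv : u ≤ v)
    (hv : v < R) : F a L v - F a L u = ∫ r in u..v, G a L r := by
  have h := integral_add_adjacent_intervals (μ := volume) (f := G a L)
    (Gint hLc le_rfl hu (lt_of_le_of_lt huv hv)) (Gint hLc hu huv hv)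
  simp only [F]
  linarith [h]

lemma Fmono (hLc : ContinuousOn L (Ico 0 R)) (hLnn : ∀ r ∈ Ico (0:ℝ) R, 0 ≤ L r)
    {u v : ℝ} (hu : 0 ≤ u) (huv : u ≤ v) (hv : v < R) : F a L u ≤ F a L v := by
  have h := Fdiff (a := a) hLc hu huv hv
  have h2 : 0 ≤ ∫ r in u..v, G a L r := by
    apply intervalIntegral.integral_nonneg huv
    exact fun x hx => Gnn hLnn x ⟨le_trans hu hx.1, lt_of_le_of_lt hx.2 hv⟩
  linarith

lemma Fnn (hLc : ContinuousOn L (Ico 0 R)) (hLnn : ∀ r ∈ Ico (0:ℝ) R, 0 ≤ L r)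
    {u : ℝ} (hu : 0 ≤ u) (hv : u < R) : 0 ≤ F a L u := by
  have h0 : F a L 0 = 0 := by simp [F]
  have := Fmono (a := a) hLc hLnn le_rfl hu hv
  linarith

lemma lemA (ha : 0 < a) (hLc : ContinuousOn L (Ico 0 R))
    (hLnn : ∀ r ∈ Ico (0:ℝ) R, 0 ≤ L r) (hL0 : L 0 = 0) (hstar : StarHyp' a R L)
    {t : ℝ} (ht0 : 0 < t) (htR : t < R) : F a L t ≤ 2 * π * t ^ 2 := by
  have key := hstar t t ht0 le_rfl htR
  simp only [sub_self, hL0, mul_zero, add_zero] at key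
  have hX : (∫ r in (0:ℝ)..t, Real.exp (-2 * a * r) * L r) = F a L t := rfl
  rw [hX] at key
  have hJ : 0 ≤ ∫ r in (0:ℝ)..t, (t - r) * Real.exp (-2 * a * r) * L r := by
    apply intervalIntegral.integral_nonneg ht0.le
    intro r hr
    have : 0 ≤ L r := hLnn r ⟨hr.1, lt_of_le_of_lt hr.2 htR⟩
    have : 0 ≤ t - r := by linarith [hr.2]
    positivity
  have ht2 : (0:ℝ) < t ^ 2 := by positivity
  have h6 : 0 ≤ (6 * a / t ^ 2) * ∫ r in (0:ℝ)..t, (t - r) * Real.exp (-2 * a * r) * L r := by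
    apply mul_nonneg (by positivity) hJ
  have h1 : F a L t / t ^ 2 ≤ 2 * π := by
    rw [div_eq_mul_inv, mul_comm, ← one_div]
    linarith
  exact (div_le_iff₀ ht2).mp h1


lemma lemU (ha : 0 < a) (hLc : ContinuousOn L (Ico 0 R))
    (hLnn : ∀ r ∈ Ico (0:ℝ) R, 0 ≤ L r) (hstar : StarHyp' a R L)
    {t c d : ℝ} (htR : t < R) (hc : 0 < c) (hcd : c < d) (hdt : d ≤ t) :
    ∃ η, c ≤ η ∧ η ≤ d ∧
      (F a L t - F a L (t - η)) + 6 * a * (∫ r in (t - η)..t, (t - r) * G a L r)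
        ≤ 2 * π * η ^ 2 + 2 * η * ((F a L (t - c) - F a L (t - d)) / (d - c)) := by
  have hmaps : ∀ u ∈ Icc c d, t - u ∈ Ico (0:ℝ) R := by
    intro u hu
    constructor
    · linarith [hu.2]
    · have : t - u ≤ t - c := by linarith [hu.1]
      linarith
  have hcont : ContinuousOn (fun u => G a L (t - u)) (Icc c d) := by
    apply (Gcont hLc).comp (Continuous.continuousOn (by continuity)) hmaps
  obtain ⟨η, hmem, hmin⟩ := (isCompact_Icc (a := c) (b := d)).exists_isMinOn
    ⟨c, left_mem_Icc.mpr hcd.le⟩ hcont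
  have hη0 : 0 < η := lt_of_lt_of_le hc hmem.1
  have hηt : η ≤ t := le_trans hmem.2 hdt
  have key := hstar η t hη0 hηt htR
  -- rewrite first integral as F-difference
  have htη : (0:ℝ) ≤ t - η := by linarith
  have hX : (∫ r in (t-η)..t, Real.exp (-2 * a * r) * L r) = F a L t - F a L (t - η) := by
    rw [Fdiff (a := a) hLc htη (by linarith) htR]; rfl
  rw [hX] at key
  -- rewrite second integrand
  have hY : (∫ r in (t-η)..t, (t - r) * Real.exp (-2 * a * r) * L r)
      = ∫ r in (t-η)..t, (t - r) * G a L r := by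
    apply intervalIntegral.integral_congr
    intro r _
    simp only [G, mul_assoc]
  rw [hY] at key
  -- average bound on G (t - η)
  rw [show (2 / η * Real.exp (-2 * a * (t - η)) * L (t - η))
      = 2 / η * G a L (t - η) from by simp only [G]; ring] at key
  have havg : G a L (t - η) ≤ (F a L (t - c) - F a L (t - d)) / (d - c) := by
    have hint : IntervalIntegrable (fun u => G a L (t - u)) volume c d :=
      (hcont.mono (by rw [uIcc_of_le hcd.le])).intervalIntegrable
    have h1 : ∫ u in c..d, G a L (t - η) ≤ ∫ u in c..d, G a L (t - u) := by
      apply intervalIntegral.integral_mono_on hcd.le intervalIntegrable_const hint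
      intro u hu
      exact hmin hu
    rw [intervalIntegral.integral_const, smul_eq_mul] at h1
    have h2 : (∫ u in c..d, G a L (t - u)) = F a L (t - c) - F a L (t - d) := by
      rw [intervalIntegral.integral_comp_sub_left (G a L) t]
      rw [Fdiff (a := a) hLc (by linarith) (by linarith) (by linarith)]
    rw [h2] at h1
    rw [le_div_iff₀ (by linarith : (0:ℝ) < d - c)]
    calc G a L (t - η) * (d - c) = (d - c) * G a L (t - η) := by ring
    _ ≤ _ := h1
  refine ⟨η, hmem.1, hmem.2, ?_⟩
  have hη2 : (0:ℝ) < η ^ 2 := by positivity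
  have hmul := mul_le_mul_of_nonneg_left key hη2.le
  have hLHS : η ^ 2 * ((1 / η ^ 2) * (F a L t - F a L (t - η))
      + (6 * a / η ^ 2) * ∫ r in (t-η)..t, (t - r) * G a L r)
      = (F a L t - F a L (t - η)) + 6 * a * (∫ r in (t-η)..t, (t - r) * G a L r) := by
    field_simp
  have hRHS : η ^ 2 * (2 * π + (2 / η) * G a L (t - η))
      = 2 * π * η ^ 2 + 2 * η * G a L (t - η) := by
    field_simp
  rw [hLHS, hRHS] at hmul
  have : 2 * η * G a L (t - η) ≤ 2 * η * ((F a L (t - c) - F a L (t - d)) / (d - c)) := by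
    apply mul_le_mul_of_nonneg_left havg (by linarith)
  linarith


set_option maxHeartbeats 1000000 in
lemma lemRec (ha : 0 < a) (hLc : ContinuousOn L (Ico 0 R))
    (hLnn : ∀ r ∈ Ico (0:ℝ) R, 0 ≤ L r) (hstar : StarHyp' a R L)
    {s : ℝ} (hs : 2 * a⁻¹ ≤ s) (hsR : s + 2 * a⁻¹ < R) :
    13 * (F a L s - F a L (s - a⁻¹)) ≤
      32 * π * a⁻¹ ^ 2 + 8 * (F a L (s - a⁻¹) - F a L (s - 2 * a⁻¹)) := by
  have hainv : 0 < a⁻¹ := inv_pos.mpr ha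
  have hs0 : 0 ≤ s - 2 * a⁻¹ := by linarith
  set t := s + 2 * a⁻¹ with hT
  clear_value t
  obtain ⟨η, hη1, hη2, key⟩ := lemU (a := a) ha hLc hLnn hstar (t := t)
    (c := 3 * a⁻¹) (d := 4 * a⁻¹) hsR (by linarith) (by linarith) (by linarith)
  have htc : t - 3 * a⁻¹ = s - a⁻¹ := by rw [hT]; ring
  have htd : t - 4 * a⁻¹ = s - 2 * a⁻¹ := by rw [hT]; ring
  rw [htc, htd] at key
  have htR : t < R := hsR
  have hIa : F a L s ≤ F a L t := Fmono (a := a) hLc hLnn (by linarith) (by linarith) htR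
  have hIb : F a L (t - η) ≤ F a L (s - a⁻¹) := by
    apply Fmono (a := a) hLc hLnn (by linarith) (by linarith) (by linarith)
  have hJsub : (2 * a⁻¹) * (F a L s - F a L (s - a⁻¹)) ≤
      ∫ r in (t - η)..t, (t - r) * G a L r := by
    have hFd : F a L s - F a L (s - a⁻¹) = ∫ r in (s - a⁻¹)..s, G a L r :=
      Fdiff (a := a) hLc (by linarith) (by linarith) (by linarith)
    have step1 : (2 * a⁻¹) * (F a L s - F a L (s - a⁻¹)) ≤
        ∫ r in (s - a⁻¹)..s, (t - r) * G a L r := by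
      rw [hFd, ← intervalIntegral.integral_const_mul]
      apply intervalIntegral.integral_mono_on (by linarith)
      · exact (Gint (a := a) hLc (by linarith) (by linarith) (by linarith)).const_mul _
      · apply ContinuousOn.intervalIntegrable
        apply ContinuousOn.mul (by fun_prop)
        apply (Gcont hLc).mono
        rw [uIcc_of_le (by linarith)]
        exact fun x hx => ⟨by linarith [hx.1], by linarith [hx.2]⟩
      · intro x hx
        have hg : 0 ≤ G a L x := Gnn hLnn x ⟨by linarith [hx.1], by linarith [hx.2]⟩
        have h2a : 2 * a⁻¹ ≤ t - x := by rw [hT]; linarith [hx.2]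
        exact mul_le_mul_of_nonneg_right h2a hg
    have step2 : (∫ r in (s - a⁻¹)..s, (t - r) * G a L r) ≤
        ∫ r in (t - η)..t, (t - r) * G a L r := by
      apply intervalIntegral.integral_mono_interval (by linarith) (by linarith) (by linarith)
      · rw [Filter.EventuallyLE, ae_restrict_iff' measurableSet_Ioc]
        apply Filter.Eventually.of_forall
        intro x hx
        have hg : 0 ≤ G a L x := Gnn hLnn x ⟨by linarith [hx.1.le], by linarith [hx.2]⟩
        have hx2 : 0 ≤ t - x := by linarith [hx.2]
        simp only [Pi.zero_apply]
        positivity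
      · apply ContinuousOn.intervalIntegrable
        apply ContinuousOn.mul (by fun_prop)
        apply (Gcont hLc).mono
        rw [uIcc_of_le (by linarith)]
        exact fun x hx => ⟨by linarith [hx.1], by linarith [hx.2]⟩
    linarith
  have hw4 : 0 ≤ F a L (s - a⁻¹) - F a L (s - 2 * a⁻¹) := by
    have := Fmono (a := a) hLc hLnn (by linarith) (by linarith : s - 2*a⁻¹ ≤ s - a⁻¹) (by linarith)
    linarith
  have hinva : a⁻¹ * a = 1 := inv_mul_cancel₀ ha.ne'
  have hJ6 : 6 * a * ((2 * a⁻¹) * (F a L s - F a L (s - a⁻¹)))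
      = 12 * (F a L s - F a L (s - a⁻¹)) := by
    linear_combination (12 * (F a L s - F a L (s - a⁻¹))) * mul_inv_cancel₀ ha.ne'
  have hπ := Real.pi_pos
  have hRHS1 : 2 * π * η ^ 2 ≤ 32 * π * a⁻¹ ^ 2 := by
    have hη4 : η ≤ 4 * a⁻¹ := hη2
    have h0η : 0 < η := by linarith
    have hsq : η ^ 2 ≤ (4 * a⁻¹) ^ 2 := by nlinarith
    calc 2 * π * η ^ 2 ≤ 2 * π * (4 * a⁻¹) ^ 2 := by nlinarith
    _ = 32 * π * a⁻¹ ^ 2 := by ring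
  have hRHS2 : 2 * η * ((F a L (s - a⁻¹) - F a L (s - 2 * a⁻¹)) / (4 * a⁻¹ - 3 * a⁻¹))
      ≤ 8 * (F a L (s - a⁻¹) - F a L (s - 2 * a⁻¹)) := by
    rw [show (4 * a⁻¹ - 3 * a⁻¹ : ℝ) = a⁻¹ by ring, div_eq_mul_inv, inv_inv]
    have hη4 : η ≤ 4 * a⁻¹ := hη2
    have h0η : 0 < η := by linarith
    have h8 : 2 * η * a ≤ 8 := by nlinarith
    calc 2 * η * ((F a L (s - a⁻¹) - F a L (s - 2 * a⁻¹)) * a)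
        = (2 * η * a) * (F a L (s - a⁻¹) - F a L (s - 2 * a⁻¹)) := by ring
    _ ≤ 8 * (F a L (s - a⁻¹) - F a L (s - 2 * a⁻¹)) := mul_le_mul_of_nonneg_right h8 hw4
  have hmul6 : 6 * a * ((2 * a⁻¹) * (F a L s - F a L (s - a⁻¹)))
      ≤ 6 * a * (∫ r in (t - η)..t, (t - r) * G a L r) := by
    apply mul_le_mul_of_nonneg_left hJsub (by positivity)
  linarith [key, hmul6]


lemma lemW (ha : 0 < a) (hLc : ContinuousOn L (Ico 0 R))
    (hLnn : ∀ r ∈ Ico (0:ℝ) R, 0 ≤ L r) (hL0 : L 0 = 0) (hstar : StarHyp' a R L)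
    {t : ℝ} (htR : t < R) :
    ∀ s : ℝ, 2 * a⁻¹ ≤ s → s ≤ t - 2 * a⁻¹ →
      F a L s - F a L (s - a⁻¹) ≤ 18 * π * a⁻¹ ^ 2 := by
  have hainv : 0 < a⁻¹ := inv_pos.mpr ha
  have hπ := Real.pi_pos
  have hX : (0:ℝ) ≤ π * a⁻¹ ^ 2 := by positivity
  have main : ∀ n : ℕ, ∀ s : ℝ, 2 * a⁻¹ ≤ s → s ≤ t - 2 * a⁻¹ →
      s ≤ 3 * a⁻¹ + n * a⁻¹ → F a L s - F a L (s - a⁻¹) ≤ 18 * π * a⁻¹ ^ 2 := by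
    intro n
    induction n with
    | zero =>
      intro s hs1 hs2 hs3
      push_cast at hs3
      have hsR : s < R := by linarith
      have hFs : F a L s ≤ 2 * π * s ^ 2 := lemA (a := a) ha hLc hLnn hL0 hstar (by linarith) hsR
      have hFnn' : 0 ≤ F a L (s - a⁻¹) := Fnn (a := a) hLc hLnn (by linarith) (by linarith)
      have hsq : s ^ 2 ≤ (3 * a⁻¹) ^ 2 := by nlinarith
      nlinarith
    | succ n ih =>
      intro s hs1 hs2 hs3
      push_cast at hs3
      by_cases hcase : s ≤ 3 * a⁻¹ + n * a⁻¹
      · exact ih s hs1 hs2 hcase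
      · push_neg at hcase
        have hncast : (0:ℝ) ≤ (n:ℝ) * a⁻¹ := by positivity
        have hrec := lemRec (a := a) ha hLc hLnn hstar (s := s) hs1 (by linarith)
        have hih := ih (s - a⁻¹) (by linarith) (by linarith) (by push_cast; linarith)
        rw [show s - a⁻¹ - a⁻¹ = s - 2 * a⁻¹ by ring] at hih
        linarith
  intro s hs1 hs2
  obtain ⟨n, hn⟩ := exists_nat_ge ((s - 3 * a⁻¹) * a)
  have hn2 : s - 3 * a⁻¹ ≤ n * a⁻¹ := by
    have h1 : s - 3 * a⁻¹ ≤ (n : ℝ) / a := (le_div_iff₀ ha).mpr hn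
    rwa [div_eq_mul_inv] at h1
  exact main n s hs1 hs2 (by linarith)

lemma lemTop (ha : 0 < a) (hLc : ContinuousOn L (Ico 0 R))
    (hLnn : ∀ r ∈ Ico (0:ℝ) R, 0 ≤ L r) (hL0 : L 0 = 0) (hstar : StarHyp' a R L)
    {t : ℝ} (ht5 : 5 * a⁻¹ ≤ t) (htR : t < R) :
    F a L t - F a L (t - 2 * a⁻¹) ≤ 176 * π * a⁻¹ ^ 2 := by
  have hainv : 0 < a⁻¹ := inv_pos.mpr ha
  have hπ := Real.pi_pos
  obtain ⟨η, hη1, hη2, key⟩ := lemU (a := a) ha hLc hLnn hstar (t := t)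
    (c := 2 * a⁻¹) (d := 4 * a⁻¹) htR (by linarith) (by linarith) (by linarith)
  have hJnn : 0 ≤ ∫ r in (t - η)..t, (t - r) * G a L r := by
    apply intervalIntegral.integral_nonneg (by linarith)
    intro r hr
    have hg : 0 ≤ G a L r := Gnn hLnn r ⟨by linarith [hr.1], by linarith [hr.2]⟩
    have : 0 ≤ t - r := by linarith [hr.2]
    positivity
  have hmono : F a L (t - η) ≤ F a L (t - 2 * a⁻¹) :=
    Fmono (a := a) hLc hLnn (by linarith) (by linarith) (by linarith)
  have hw1 := lemW (a := a) ha hLc hLnn hL0 hstar htR (t - 2 * a⁻¹) (by linarith) (by linarith)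
  have hw2 := lemW (a := a) ha hLc hLnn hL0 hstar htR (t - 3 * a⁻¹) (by linarith) (by linarith)
  rw [show t - 2 * a⁻¹ - a⁻¹ = t - 3 * a⁻¹ by ring] at hw1
  rw [show t - 3 * a⁻¹ - a⁻¹ = t - 4 * a⁻¹ by ring] at hw2
  have hXnn : 0 ≤ F a L (t - 2 * a⁻¹) - F a L (t - 4 * a⁻¹) := by
    have := Fmono (a := a) hLc hLnn (by linarith) (by linarith : t - 4*a⁻¹ ≤ t - 2*a⁻¹) (by linarith)
    linarith
  have hdiv : 2 * η * ((F a L (t - 2 * a⁻¹) - F a L (t - 4 * a⁻¹)) / (4 * a⁻¹ - 2 * a⁻¹))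
      ≤ 4 * (F a L (t - 2 * a⁻¹) - F a L (t - 4 * a⁻¹)) := by
    rw [show (4 * a⁻¹ - 2 * a⁻¹ : ℝ) = 2 * a⁻¹ by ring, div_eq_mul_inv, mul_inv, inv_inv]
    have h4 : 2 * η * (2⁻¹ * a) ≤ 4 := by
      nlinarith [mul_nonneg (sub_nonneg.mpr hη2) ha.le, inv_mul_cancel₀ ha.ne']
    calc 2 * η * ((F a L (t - 2 * a⁻¹) - F a L (t - 4 * a⁻¹)) * (2⁻¹ * a))
        = (2 * η * (2⁻¹ * a)) * (F a L (t - 2 * a⁻¹) - F a L (t - 4 * a⁻¹)) := by ring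
    _ ≤ 4 * (F a L (t - 2 * a⁻¹) - F a L (t - 4 * a⁻¹)) := mul_le_mul_of_nonneg_right h4 hXnn
  have hRHS1 : 2 * π * η ^ 2 ≤ 32 * π * a⁻¹ ^ 2 := by
    have h0η : 0 < η := by linarith
    have hsq : η ^ 2 ≤ (4 * a⁻¹) ^ 2 := by nlinarith
    calc 2 * π * η ^ 2 ≤ 2 * π * (4 * a⁻¹) ^ 2 := by nlinarith
    _ = 32 * π * a⁻¹ ^ 2 := by ring
  nlinarith [key, hJnn]

lemma piece (ha : 0 < a) (hLc : ContinuousOn L (Ico 0 R))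
    (hLnn : ∀ r ∈ Ico (0:ℝ) R, 0 ≤ L r) {u v : ℝ} (hu : 0 ≤ u) (huv : u ≤ v) (hv : v < R) :
    ∫ r in u..v, Real.exp (2 * a * r) * G a L r
      ≤ Real.exp (2 * a * v) * (F a L v - F a L u) := by
  have h1 : ∫ r in u..v, Real.exp (2 * a * r) * G a L r
      ≤ ∫ r in u..v, Real.exp (2 * a * v) * G a L r := by
    apply intervalIntegral.integral_mono_on huv
    · apply ContinuousOn.intervalIntegrable
      apply ContinuousOn.mul (by fun_prop)
      apply (Gcont hLc).mono
      rw [uIcc_of_le huv]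
      exact fun x hx => ⟨le_trans hu hx.1, lt_of_le_of_lt hx.2 hv⟩
    · exact ((Gint (a := a) hLc hu huv hv).const_mul _)
    · intro x hx
      have hg : 0 ≤ G a L x := Gnn hLnn x ⟨le_trans hu hx.1, lt_of_le_of_lt hx.2 hv⟩
      have : Real.exp (2 * a * x) ≤ Real.exp (2 * a * v) := by
        apply Real.exp_le_exp.mpr
        nlinarith [hx.2]
      exact mul_le_mul_of_nonneg_right this hg
  rw [intervalIntegral.integral_const_mul] at h1
  rw [Fdiff (a := a) hLc hu huv hv]
  exact h1

lemma lemSum (ha : 0 < a) (hLc : ContinuousOn L (Ico 0 R))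
    (hLnn : ∀ r ∈ Ico (0:ℝ) R, 0 ≤ L r) (hL0 : L 0 = 0) (hstar : StarHyp' a R L)
    {t : ℝ} (ht5 : 5 * a⁻¹ ≤ t) (htR : t < R) {τ : ℝ} (hτ1 : 2 * a⁻¹ ≤ τ)
    (hτ2 : τ ≤ t - 2 * a⁻¹) :
    ∫ r in (2 * a⁻¹)..τ, Real.exp (2 * a * r) * G a L r
      ≤ (18 * π * a⁻¹ ^ 2 / (1 - Real.exp (-2))) * Real.exp (2 * a * τ) := by
  have hainv : 0 < a⁻¹ := inv_pos.mpr ha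
  have hπ := Real.pi_pos
  have he2 : Real.exp (-2) < 1 := by
    rw [show (1:ℝ) = Real.exp 0 by simp]
    exact Real.exp_lt_exp.mpr (by norm_num)
  have hKpos : 0 < 18 * π * a⁻¹ ^ 2 / (1 - Real.exp (-2)) := div_pos (by positivity) (by linarith)
  set K := 18 * π * a⁻¹ ^ 2 / (1 - Real.exp (-2)) with hK
  have hKeq : 18 * π * a⁻¹ ^ 2 = K * (1 - Real.exp (-2)) := by
    rw [hK, div_mul_cancel₀]
    linarith
  clear_value K
  have main : ∀ n : ℕ, ∀ τ : ℝ, 2 * a⁻¹ ≤ τ → τ ≤ t - 2 * a⁻¹ → τ ≤ 2 * a⁻¹ + n * a⁻¹ →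
      ∫ r in (2 * a⁻¹)..τ, Real.exp (2 * a * r) * G a L r ≤ K * Real.exp (2 * a * τ) := by
    intro n
    induction n with
    | zero =>
      intro τ h1 h2 h3
      push_cast at h3
      have : τ = 2 * a⁻¹ := by linarith
      subst this
      rw [intervalIntegral.integral_same]
      positivity
    | succ n ih =>
      intro τ h1 h2 h3
      push_cast at h3
      have hτR : τ < R := by linarith
      have hw := lemW (a := a) ha hLc hLnn hL0 hstar htR τ h1 h2
      by_cases hcase : τ ≤ 3 * a⁻¹
      · have hp := piece (a := a) ha hLc hLnn (u := 2 * a⁻¹) (v := τ) (by linarith) h1 hτR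
        have hmono : F a L (2 * a⁻¹) ≤ F a L τ ∧ F a L (τ - a⁻¹) ≤ F a L (2 * a⁻¹) := by
          constructor
          · exact Fmono (a := a) hLc hLnn (by linarith) h1 hτR
          · exact Fmono (a := a) hLc hLnn (by linarith) (by linarith) (by linarith)
        have hFb : F a L τ - F a L (2 * a⁻¹) ≤ 18 * π * a⁻¹ ^ 2 := by linarith [hw, hmono.2]
        have hexp : (0:ℝ) < Real.exp (2 * a * τ) := Real.exp_pos _
        calc ∫ r in (2 * a⁻¹)..τ, Real.exp (2 * a * r) * G a L r
            ≤ Real.exp (2 * a * τ) * (F a L τ - F a L (2 * a⁻¹)) := hp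
        _ ≤ Real.exp (2 * a * τ) * (18 * π * a⁻¹ ^ 2) := by
            apply mul_le_mul_of_nonneg_left hFb hexp.le
        _ = (18 * π * a⁻¹ ^ 2) * Real.exp (2 * a * τ) := by ring
        _ ≤ K * Real.exp (2 * a * τ) := by
            have h18 : 18 * π * a⁻¹ ^ 2 ≤ K := by
              nlinarith [mul_pos hKpos (Real.exp_pos (-2))]
            exact mul_le_mul_of_nonneg_right h18 (Real.exp_nonneg _)
      · push_neg at hcase
        have hsplit := integral_add_adjacent_intervals (μ := volume)
          (f := fun r => Real.exp (2 * a * r) * G a L r)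
          (a := 2 * a⁻¹) (b := τ - a⁻¹) (c := τ) ?_ ?_
        · have hih := ih (τ - a⁻¹) (by linarith) (by linarith) (by linarith)
          have hp := piece (a := a) ha hLc hLnn (u := τ - a⁻¹) (v := τ) (by linarith)
            (by linarith) hτR
          have hF2 : F a L τ - F a L (τ - a⁻¹) ≤ 18 * π * a⁻¹ ^ 2 := hw
          have hexp : (0:ℝ) < Real.exp (2 * a * τ) := Real.exp_pos _
          have hFmono2 : 0 ≤ F a L τ - F a L (τ - a⁻¹) := by
            have := Fmono (a := a) hLc hLnn (by linarith) (by linarith : τ - a⁻¹ ≤ τ) hτR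
            linarith
          have heq : Real.exp (2 * a * (τ - a⁻¹)) = Real.exp (2 * a * τ) * Real.exp (-2) := by
            rw [← Real.exp_add]
            congr 1
            linear_combination (-2 : ℝ) * mul_inv_cancel₀ ha.ne'
          rw [← hsplit]
          have hb2 : Real.exp (2 * a * τ) * (F a L τ - F a L (τ - a⁻¹))
              ≤ Real.exp (2 * a * τ) * (18 * π * a⁻¹ ^ 2) :=
            mul_le_mul_of_nonneg_left hF2 hexp.le
          calc (∫ r in (2 * a⁻¹)..(τ - a⁻¹), Real.exp (2 * a * r) * G a L r)
                + ∫ r in (τ - a⁻¹)..τ, Real.exp (2 * a * r) * G a L r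
              ≤ K * Real.exp (2 * a * (τ - a⁻¹))
                + Real.exp (2 * a * τ) * (18 * π * a⁻¹ ^ 2) := by
                linarith [hp]
          _ = K * Real.exp (2 * a * τ) := by
              rw [heq, hKeq]; ring
        · apply ContinuousOn.intervalIntegrable
          apply ContinuousOn.mul (by fun_prop)
          apply (Gcont hLc).mono
          rw [uIcc_of_le (by linarith)]
          exact fun x hx => ⟨by linarith [hx.1], by linarith [hx.2]⟩
        · apply ContinuousOn.intervalIntegrable
          apply ContinuousOn.mul (by fun_prop)
          apply (Gcont hLc).mono
          rw [uIcc_of_le (by linarith)]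
          exact fun x hx => ⟨by linarith [hx.1], by linarith [hx.2]⟩
  obtain ⟨n, hn⟩ := exists_nat_ge ((τ - 2 * a⁻¹) * a)
  have hn2 : τ - 2 * a⁻¹ ≤ n * a⁻¹ := by
    have h1 : τ - 2 * a⁻¹ ≤ (n : ℝ) / a := (le_div_iff₀ ha).mpr hn
    rwa [div_eq_mul_inv] at h1
  exact main n τ hτ1 hτ2 (by linarith)

end Stmt9Aux

set_option maxHeartbeats 1600000 in
open Stmt9Aux in
theorem stmt_9 (a : ℝ) (ha : 0 < a) :
    ∃ C : ℝ, 0 < C ∧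
      ∀ (R : ℝ) (L : ℝ → ℝ), 0 < R →
        ContinuousOn L (Set.Ico (0:ℝ) R) →
        (∀ r ∈ Set.Ico (0:ℝ) R, 0 ≤ L r) →
        L 0 = 0 →
        StarHyp' a R L →
        ∀ t ∈ Set.Ioo (0:ℝ) R,
          (∫ r in (0:ℝ)..t, L r) ≤ C * Real.exp (2 * a * t) := by
  have hainv : 0 < a⁻¹ := inv_pos.mpr ha
  have hπ := Real.pi_pos
  have hπa : (0:ℝ) ≤ π * a⁻¹ ^ 2 := by positivity
  have he2 : Real.exp (-2) < 1 := by
    rw [show (1:ℝ) = Real.exp 0 by simp]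
    exact Real.exp_lt_exp.mpr (by norm_num)
  have he4 : (1:ℝ) ≤ Real.exp 4 := by
    rw [show (1:ℝ) = Real.exp 0 by simp]
    exact Real.exp_le_exp.mpr (by norm_num)
  set K := 18 * π * a⁻¹ ^ 2 / (1 - Real.exp (-2)) with hKdef
  have hKpos : 0 < K := div_pos (by positivity) (by linarith)
  refine ⟨1000 * π * a⁻¹ ^ 2 * Real.exp 4 + K + 1, by positivity, ?_⟩
  intro R L hR hLc hLnn hL0 hstar t ht
  obtain ⟨ht0, htR⟩ := ht
  have hgoal_eq : (∫ r in (0:ℝ)..t, L r)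
      = ∫ r in (0:ℝ)..t, Real.exp (2 * a * r) * G a L r := by
    apply intervalIntegral.integral_congr
    intro r _
    simp only [G]
    rw [← mul_assoc, ← Real.exp_add, show 2*a*r + -2*a*r = 0 by ring, Real.exp_zero, one_mul]
  rw [hgoal_eq]
  have hF0 : F a L 0 = 0 := by simp [F]
  have hexp1 : (1:ℝ) ≤ Real.exp (2 * a * t) := by
    rw [show (1:ℝ) = Real.exp 0 by simp]
    exact Real.exp_le_exp.mpr (by nlinarith)
  by_cases hcase : t < 5 * a⁻¹
  · -- small t
    have hp := piece (a := a) ha hLc hLnn (u := 0) (v := t) le_rfl ht0.le htR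
    rw [hF0, sub_zero] at hp
    have hFt : F a L t ≤ 2 * π * t ^ 2 := lemA (a := a) ha hLc hLnn hL0 hstar ht0 htR
    have h50 : F a L t ≤ 50 * π * a⁻¹ ^ 2 := by
      have hsq : t ^ 2 ≤ (5 * a⁻¹) ^ 2 := by nlinarith
      nlinarith [mul_nonneg hπ.le (sub_nonneg.mpr hsq)]
    have hC : 50 * π * a⁻¹ ^ 2 ≤ 1000 * π * a⁻¹ ^ 2 * Real.exp 4 + K + 1 := by
      have h1 : 0 ≤ (1000 * Real.exp 4 - 50) * (π * a⁻¹ ^ 2) :=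
        mul_nonneg (by nlinarith) hπa
      nlinarith
    calc ∫ r in (0:ℝ)..t, Real.exp (2 * a * r) * G a L r
        ≤ Real.exp (2 * a * t) * F a L t := hp
    _ ≤ Real.exp (2 * a * t) * (50 * π * a⁻¹ ^ 2) := by
        apply mul_le_mul_of_nonneg_left h50 (Real.exp_nonneg _)
    _ ≤ Real.exp (2 * a * t) * (1000 * π * a⁻¹ ^ 2 * Real.exp 4 + K + 1) := by
        apply mul_le_mul_of_nonneg_left hC (Real.exp_nonneg _)
    _ = (1000 * π * a⁻¹ ^ 2 * Real.exp 4 + K + 1) * Real.exp (2 * a * t) := by ring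
  · push_neg at hcase
    have hint1 : IntervalIntegrable (fun r => Real.exp (2*a*r) * G a L r) volume 0 (2*a⁻¹) := by
      apply ContinuousOn.intervalIntegrable
      apply ContinuousOn.mul (by fun_prop)
      apply (Gcont hLc).mono
      rw [uIcc_of_le (by linarith)]
      exact fun x hx => ⟨by linarith [hx.1], by linarith [hx.2]⟩
    have hint2 : IntervalIntegrable (fun r => Real.exp (2*a*r) * G a L r) volume (2*a⁻¹) (t - 2*a⁻¹) := by
      apply ContinuousOn.intervalIntegrable
      apply ContinuousOn.mul (by fun_prop)
      apply (Gcont hLc).mono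
      rw [uIcc_of_le (by linarith)]
      exact fun x hx => ⟨by linarith [hx.1], by linarith [hx.2]⟩
    have hint3 : IntervalIntegrable (fun r => Real.exp (2*a*r) * G a L r) volume (t - 2*a⁻¹) t := by
      apply ContinuousOn.intervalIntegrable
      apply ContinuousOn.mul (by fun_prop)
      apply (Gcont hLc).mono
      rw [uIcc_of_le (by linarith)]
      exact fun x hx => ⟨by linarith [hx.1], by linarith [hx.2]⟩
    have hsplit1 := integral_add_adjacent_intervals (μ := volume)
      (f := fun r => Real.exp (2*a*r) * G a L r) hint2 hint3
    have hsplit2 := integral_add_adjacent_intervals (μ := volume)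
      (f := fun r => Real.exp (2*a*r) * G a L r) hint1 (hint2.trans hint3)
    -- piece 1
    have hp1 : ∫ r in (0:ℝ)..(2*a⁻¹), Real.exp (2*a*r) * G a L r
        ≤ Real.exp 4 * (8 * π * a⁻¹ ^ 2) := by
      have hp := piece (a := a) ha hLc hLnn (u := 0) (v := 2*a⁻¹) le_rfl (by linarith)
        (by linarith)
      rw [hF0, sub_zero] at hp
      have hFv : F a L (2*a⁻¹) ≤ 2 * π * (2*a⁻¹) ^ 2 :=
        lemA (a := a) ha hLc hLnn hL0 hstar (by linarith) (by linarith)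
      have hee : Real.exp (2 * a * (2*a⁻¹)) = Real.exp 4 := by
        congr 1
        linear_combination (4:ℝ) * mul_inv_cancel₀ ha.ne'
      rw [hee] at hp
      have hFnn' : 0 ≤ F a L (2*a⁻¹) := Fnn (a := a) hLc hLnn (by linarith) (by linarith)
      have : Real.exp 4 * F a L (2*a⁻¹) ≤ Real.exp 4 * (8 * π * a⁻¹ ^ 2) := by
        apply mul_le_mul_of_nonneg_left (by nlinarith) (Real.exp_nonneg _)
      linarith
    -- piece 2
    have hp2 : ∫ r in (2*a⁻¹)..(t - 2*a⁻¹), Real.exp (2*a*r) * G a L r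
        ≤ K * Real.exp (2 * a * t) := by
      have h := lemSum (a := a) ha hLc hLnn hL0 hstar hcase htR
        (τ := t - 2*a⁻¹) (by linarith) le_rfl
      rw [← hKdef] at h
      have hmono : Real.exp (2 * a * (t - 2*a⁻¹)) ≤ Real.exp (2 * a * t) := by
        apply Real.exp_le_exp.mpr
        have : t - 2*a⁻¹ ≤ t := by linarith
        nlinarith
      calc ∫ r in (2*a⁻¹)..(t - 2*a⁻¹), Real.exp (2*a*r) * G a L r
          ≤ K * Real.exp (2 * a * (t - 2*a⁻¹)) := h
      _ ≤ K * Real.exp (2 * a * t) := mul_le_mul_of_nonneg_left hmono hKpos.le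
    -- piece 3
    have hp3 : ∫ r in (t - 2*a⁻¹)..t, Real.exp (2*a*r) * G a L r
        ≤ Real.exp (2 * a * t) * (176 * π * a⁻¹ ^ 2) := by
      have hp := piece (a := a) ha hLc hLnn (u := t - 2*a⁻¹) (v := t) (by linarith)
        (by linarith) htR
      have htop := lemTop (a := a) ha hLc hLnn hL0 hstar hcase htR
      calc ∫ r in (t - 2*a⁻¹)..t, Real.exp (2*a*r) * G a L r
          ≤ Real.exp (2 * a * t) * (F a L t - F a L (t - 2*a⁻¹)) := hp
      _ ≤ Real.exp (2 * a * t) * (176 * π * a⁻¹ ^ 2) :=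
          mul_le_mul_of_nonneg_left htop (Real.exp_nonneg _)
    -- combine
    have hCsum : Real.exp 4 * (8 * π * a⁻¹ ^ 2) + K + 176 * π * a⁻¹ ^ 2
        ≤ 1000 * π * a⁻¹ ^ 2 * Real.exp 4 + K + 1 := by
      have h1 : 0 ≤ (992 * Real.exp 4 - 176) * (π * a⁻¹ ^ 2) :=
        mul_nonneg (by nlinarith) hπa
      nlinarith
    have hfin : (∫ r in (0:ℝ)..t, Real.exp (2*a*r) * G a L r)
        ≤ (Real.exp 4 * (8 * π * a⁻¹ ^ 2) + K + 176 * π * a⁻¹ ^ 2) * Real.exp (2 * a * t) := by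
      rw [← hsplit2, ← hsplit1]
      have hA : (0:ℝ) ≤ Real.exp 4 * (8 * π * a⁻¹ ^ 2) := by positivity
      have hh1 : Real.exp 4 * (8 * π * a⁻¹ ^ 2)
          ≤ Real.exp 4 * (8 * π * a⁻¹ ^ 2) * Real.exp (2 * a * t) := by
        nlinarith [hA, hexp1]
      linarith [hp1, hp2, hp3, hh1]
    calc (∫ r in (0:ℝ)..t, Real.exp (2*a*r) * G a L r)
        ≤ (Real.exp 4 * (8 * π * a⁻¹ ^ 2) + K + 176 * π * a⁻¹ ^ 2) * Real.exp (2 * a * t) := hfin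
    _ ≤ (1000 * π * a⁻¹ ^ 2 * Real.exp 4 + K + 1) * Real.exp (2 * a * t) :=
        mul_le_mul_of_nonneg_right hCsum (Real.exp_nonneg _)
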